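/- Let $\mathcal{S} = (\mathit{Pos}, \mathit{Neg}, \mathit{Ex}, \mathit{Uni})$ be a sample. If there exists a DFA $\mathcal{B}$ with $n$ states satisfying $\mathit{Pos} \subseteq L(\mathcal{B})$, then the propositional formula $\psi_n^{\mathit{Pos}} = \varphi_n^{\mathrm{DFA}} \wedge \varphi_n^W \wedge \varphi_n^{\mathit{Pos}}$ is satisfiable; conversely, every model of $\psi_n^{\mathit{Pos}}$ yields a DFA $\mathcal{A}_\mathfrak{M}$ with $n$ states satisfying $\mathit{Pos} \subseteq L(\mathcal{A}_\mathfrak{M})$. -/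

import Mathlib

/-- The set of prefixes of words in `W`. -/
def Pref {α : Type*} (W : Set (List α)) : Set (List α) := {u | ∃ v, u ++ v ∈ W}

/-- `φₙᴰᶠᴬ`: the variables `d p a q` encode a total deterministic transition
function on the states `{0, …, n-1}`. -/
def PhiDFA {α : Type*} {n : ℕ} (d : Fin n → α → Fin n → Prop) : Prop :=
  (∀ (p : Fin n) (a : α) (q q' : Fin n), d p a q → d p a q' → q = q') ∧
    ∀ (p : Fin n) (a : α), ∃ q, d p a q

/-- `φₙᵂ`: the variables `x u q` track the run of the encoded DFA on every
prefix of the finite word set `W`. -/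
def PhiW {α : Type*} {n : ℕ} (q0 : Fin n) (W : Set (List α))
    (d : Fin n → α → Fin n → Prop) (x : List α → Fin n → Prop) : Prop :=
  x [] q0 ∧ (∀ u ∈ Pref W, ∀ q q' : Fin n, x u q → x u q' → q = q') ∧
    ∀ (u : List α) (a : α), u ++ [a] ∈ Pref W →
      ∀ p q, x u p → d p a q → x (u ++ [a]) q

/-- `φₙᴾᵒˢ`: every positive word leads to a final state. -/
def PhiPos {α : Type*} {n : ℕ} (Pos : Set (List α))
    (x : List α → Fin n → Prop) (f : Fin n → Prop) : Prop :=
  ∀ u ∈ Pos, ∀ q, x u q → f q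

/-- The language of the DFA with transition function `δ`, initial state `q0`
and final states `F`. -/
def DFALang {Q α : Type*} (δ : Q → α → Q) (q0 : Q) (F : Set Q) : Set (List α) :=
  {w | w.foldl δ q0 ∈ F}

/-- If some DFA `ℬ` with `n` states accepts all words of `Pos`, then the
formula `ψₙᴾᵒˢ = φₙᴰᶠᴬ ∧ φₙᵂ ∧ φₙᴾᵒˢ` is satisfiable; conversely, every model
of `ψₙᴾᵒˢ` yields a DFA `𝒜_𝔐` with `n` states satisfying `Pos ⊆ L(𝒜_𝔐)`. -/
theorem stmt9 {α : Type*} {n : ℕ} (hn : 0 < n)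
    (Pos W : Set (List α)) (hPosW : Pos ⊆ W)
    (hWfin : W.Finite) (hPosfin : Pos.Finite) :
    ((∃ (Q : Type) (_ : Fintype Q), Fintype.card Q = n ∧
        ∃ (δ : Q → α → Q) (q0 : Q) (Fq : Set Q), Pos ⊆ DFALang δ q0 Fq) →
      ∃ (d : Fin n → α → Fin n → Prop) (f : Fin n → Prop)
        (x : List α → Fin n → Prop),
        PhiDFA d ∧ PhiW ⟨0, hn⟩ W d x ∧ PhiPos Pos x f) ∧
    (∀ (d : Fin n → α → Fin n → Prop) (f : Fin n → Prop)
        (x : List α → Fin n → Prop),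
      PhiDFA d → PhiW ⟨0, hn⟩ W d x → PhiPos Pos x f →
      ∀ δ : Fin n → α → Fin n, (∀ p a q, d p a q ↔ δ p a = q) →
        Pos ⊆ DFALang δ ⟨0, hn⟩ {q | f q}) := by
  constructor
  · rintro ⟨Q, _, hcard, δ, q0, Fq, hPos⟩
    obtain ⟨e⟩ : Nonempty (Q ≃ Fin n) := ⟨Fintype.equivFinOfCardEq hcard⟩
    set e' : Q ≃ Fin n := e.trans (Equiv.swap (e q0) ⟨0, hn⟩) with he'
    have hq0 : e' q0 = ⟨0, hn⟩ := by simp [he', Equiv.swap_apply_left]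
    refine ⟨fun p a q => e' (δ (e'.symm p) a) = q, fun q => e'.symm q ∈ Fq,
      fun u q => e' (u.foldl δ q0) = q, ⟨?_, ?_⟩, ⟨?_, ?_, ?_⟩, ?_⟩
    · rintro p a q q' rfl rfl; rfl
    · intro p a; exact ⟨_, rfl⟩
    · exact hq0
    · rintro u _ q q' rfl rfl; rfl
    · rintro u a _ p q rfl rfl
      simp [List.foldl_append]
    · rintro u hu q rfl
      simpa [DFALang] using hPos hu
  · rintro d f x ⟨hdet, htot⟩ ⟨hx0, hxu, hxp⟩ hpos δ hδ u hu
    have key : ∀ u : List α, u ∈ Pref W → x u (u.foldl δ ⟨0, hn⟩) := by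
      intro u
      induction u using List.reverseRecOn with
      | nil => intro _; simpa using hx0
      | append_singleton v a ih =>
        intro hv
        have hv' : v ∈ Pref W := by
          obtain ⟨w, hw⟩ := hv
          exact ⟨a :: w, by simpa using hw⟩
        have := hxp v a hv _ _ (ih hv') ((hδ _ a _).2 rfl)
        simpa [List.foldl_append] using this
    have huW : u ∈ Pref W := ⟨[], by simpa using hPosW hu⟩
    exact hpos u hu _ (key u huW)
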